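/- If A ∈ End(ℂ^n) satisfies the reflection equation with the standard Uq(gl(n)) braid matrix (q generic), then for all indices i, j, m, k with j ≠ m, m ≠ k, k ≠ i, and (m - i)(k - j) < 0, one has A^k_i A^j_m = 0. In particular, the positions of the nonzero off-diagonal entries of A form the graph of a strictly decreasing partial map. -/
import Mathlib


open Matrix Kronecker

/-- The coefficient `s_{ik}`: `q - q⁻¹` if `i < k`, `q` if `i = k`, `0` if `i > k`. -/
noncomputable def sCoeff {n : ℕ} (q : ℂ) (i k : Fin n) : ℂ :=
  if (i : ℕ) < (k : ℕ) then q - q⁻¹ else if i = k then q else 0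

/-- The standard `U_q(gl(n))` braid matrix
`S = Σ_{i,k} s_{ik} e^i_i ⊗ e^k_k + Σ_{i≠j} e^i_j ⊗ e^j_i` on `ℂ^n ⊗ ℂ^n`. -/
noncomputable def braidS (n : ℕ) (q : ℂ) :
    Matrix (Fin n × Fin n) (Fin n × Fin n) ℂ :=
  fun p r =>
    (if p.1 = r.1 ∧ p.2 = r.2 then sCoeff q p.1 p.2 else 0) +
    (if p.1 ≠ p.2 ∧ r.1 = p.2 ∧ r.2 = p.1 then 1 else 0)

/-- `A₂ = 1 ⊗ A` on `ℂ^n ⊗ ℂ^n`. -/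
noncomputable def A2 {n : ℕ} (A : Matrix (Fin n) (Fin n) ℂ) :
    Matrix (Fin n × Fin n) (Fin n × Fin n) ℂ :=
  (1 : Matrix (Fin n) (Fin n) ℂ) ⊗ₖ A

/-- The reflection equation `S A₂ S A₂ = A₂ S A₂ S`. -/
noncomputable def RE (n : ℕ) (q : ℂ) (A : Matrix (Fin n) (Fin n) ℂ) : Prop :=
  braidS n q * A2 A * braidS n q * A2 A = A2 A * braidS n q * A2 A * braidS n q

/-- For a solution of the reflection equation, `A^k_i A^j_m = 0` whenever
`j ≠ m`, `m ≠ k`, `k ≠ i` and `(m - i)(k - j) < 0`; hence the nonzero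
off-diagonal entries form the graph of a strictly decreasing partial map. -/
lemma SA_apply {n : ℕ} (q : ℂ) (A : Matrix (Fin n) (Fin n) ℂ) (a b e f : Fin n) :
    (braidS n q * A2 A) (a, b) (e, f) =
      (if a = e then sCoeff q a b * A b f else 0) +
      (if a ≠ b ∧ e = b then A a f else 0) := by
  rw [Matrix.mul_apply, Fintype.sum_prod_type]
  simp only [braidS, A2, kroneckerMap_apply, one_apply, add_mul, ite_mul, one_mul, zero_mul,
    mul_ite, mul_zero, mul_one, Finset.sum_add_distrib, ite_and]
  rw [Finset.sum_comm]
  simp only [Finset.sum_ite_irrel, Finset.sum_const_zero, Finset.sum_ite_eq',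
    Finset.sum_ite_eq, Finset.mem_univ, if_true, Finset.sum_add_distrib]

lemma AS_apply {n : ℕ} (q : ℂ) (A : Matrix (Fin n) (Fin n) ℂ) (a b e f : Fin n) :
    (A2 A * braidS n q) (a, b) (e, f) =
      (if a = e then A b f * sCoeff q a f else 0) +
      (if a ≠ e ∧ f = a then A b e else 0) := by
  rw [Matrix.mul_apply, Fintype.sum_prod_type]
  simp only [braidS, A2, kroneckerMap_apply, one_apply, add_mul, ite_mul, one_mul, zero_mul,
    mul_ite, mul_zero, mul_one, Finset.sum_add_distrib, ite_and, mul_add]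
  simp only [Finset.sum_ite_irrel, Finset.sum_const_zero, Finset.sum_ite_eq',
    Finset.sum_ite_eq, Finset.mem_univ, if_true, Finset.sum_add_distrib]
  have key : ∀ x y : Fin n,
      (if x ≠ y then if e = y then if f = x then if a = x then A b y else 0 else 0 else 0 else 0) =
      (if a = x then (if e = y then (if a ≠ e ∧ f = a then A b e else 0) else 0) else 0) := by
    intro x y
    split_ifs <;> simp_all
  simp only [key, Finset.sum_ite_irrel, Finset.sum_const_zero, Finset.sum_ite_eq',
    Finset.sum_ite_eq, Finset.mem_univ, if_true]
  rw [ite_and]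
  congr 1
  split_ifs with h
  · rw [h]
  · rfl


lemma key1_lem {n : ℕ} (q : ℂ) (A : Matrix (Fin n) (Fin n) ℂ) (i j m k : Fin n)
    (hjm : j ≠ m) (hmk : m ≠ k) (x x1 : Fin n) :
    (if ¬x = x1 then
        if m = x1 then
          (if k = x then sCoeff q k j * A j x1 * A x i else 0) +
            if x = j then A k x1 * A x i else 0
        else 0
      else 0)
    = (if m = x1 then
        (if k = x then sCoeff q k j * A j m * A k i else 0) +
          if x = j then A k m * A j i else 0
      else 0) := by
  split_ifs <;> simp_all

lemma key2_lem {n : ℕ} (q : ℂ) (A : Matrix (Fin n) (Fin n) ℂ) (i j m k : Fin n)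
    (hmi : m ≠ i) (hki : k ≠ i) (x : Fin n) :
    (if ¬x = m then
        if i = x then
          (if k = x then ∑ y : Fin n, A j y * sCoeff q k y * A y m else 0) +
            if ¬k = x then A j x * A k m else 0
        else 0
      else 0)
    = (if i = x then A j i * A k m else 0) := by
  split_ifs <;> simp_all

theorem RE_decreasing (n : ℕ) (hn : 1 ≤ n) (q : ℂ) (hq : q ≠ 0) (hq2 : q ^ 2 ≠ 1)
    (A : Matrix (Fin n) (Fin n) ℂ) (hA : RE n q A)
    (i j m k : Fin n) (hjm : j ≠ m) (hmk : m ≠ k) (hki : k ≠ i)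
    (hlt : (((m : ℕ) : ℤ) - ((i : ℕ) : ℤ)) * (((k : ℕ) : ℤ) - ((j : ℕ) : ℤ)) < 0) :
    A k i * A j m = 0 := by
  have hcase : ((k:ℕ) < (j:ℕ) ∧ (i:ℕ) < (m:ℕ)) ∨ ((j:ℕ) < (k:ℕ) ∧ (m:ℕ) < (i:ℕ)) := by
    rcases mul_neg_iff.mp hlt with ⟨h1, h2⟩ | ⟨h1, h2⟩ <;> [left; right] <;> constructor <;> omega
  have hkj : k ≠ j := by
    rcases hcase with ⟨h1, _⟩ | ⟨h1, _⟩ <;> exact fun h => by simp [h] at h1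
  have hmi : m ≠ i := by
    rcases hcase with ⟨_, h1⟩ | ⟨_, h1⟩ <;> exact fun h => by simp [h] at h1
  have hA' : braidS n q * A2 A * braidS n q * A2 A
      = A2 A * braidS n q * A2 A * braidS n q := hA
  have h0 : (braidS n q * A2 A) * (braidS n q * A2 A)
      = (A2 A * braidS n q) * (A2 A * braidS n q) := by
    rw [← mul_assoc, ← mul_assoc]; exact hA'
  have h1 : ((braidS n q * A2 A) * (braidS n q * A2 A)) (k, j) (m, i)
      = ((A2 A * braidS n q) * (A2 A * braidS n q)) (k, j) (m, i) := by rw [h0]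
  rw [Matrix.mul_apply, Matrix.mul_apply, Fintype.sum_prod_type, Fintype.sum_prod_type] at h1
  simp only [SA_apply, AS_apply, add_mul, mul_add, ite_mul, mul_ite, mul_zero, zero_mul,
    Finset.sum_add_distrib, ite_and, Finset.sum_ite_irrel, Finset.sum_const_zero,
    Finset.sum_ite_eq, Finset.sum_ite_eq', Finset.mem_univ, if_true,
    hkj, hmi, hjm, hmk, hki, hmk.symm, hki.symm, hjm.symm, hkj.symm, hmi.symm,
    ne_eq, not_false_eq_true, if_false, ite_false, ite_true] at h1
  simp only [key1_lem q A i j m k hjm hmk, key2_lem q A i j m k hmi hki, Finset.sum_ite_irrel, Finset.sum_const_zero, Finset.sum_ite_eq,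
    Finset.sum_ite_eq', Finset.mem_univ, if_true, Finset.sum_add_distrib,
    hkj, hmk.symm, hki.symm, ne_eq, not_false_eq_true, if_false, ite_false, ite_true,
    if_neg, zero_add, add_zero] at h1
  have h2 : (sCoeff q k j - sCoeff q m i) * (A k i * A j m) = 0 := by linear_combination h1
  have hqq : q - q⁻¹ ≠ 0 := by
    intro h
    apply hq2
    have hq' : q = q⁻¹ := sub_eq_zero.mp h
    rw [sq]
    nth_rewrite 2 [hq']
    exact mul_inv_cancel₀ hq
  rcases hcase with ⟨h1', h2'⟩ | ⟨h1', h2'⟩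
  · have e1 : sCoeff q k j = q - q⁻¹ := if_pos h1'
    have e2 : sCoeff q m i = 0 := by rw [sCoeff, if_neg (by omega), if_neg hmi]
    rw [e1, e2, sub_zero] at h2
    exact (mul_eq_zero.mp h2).resolve_left hqq
  · have e1 : sCoeff q k j = 0 := by rw [sCoeff, if_neg (by omega), if_neg hkj]
    have e2 : sCoeff q m i = q - q⁻¹ := if_pos h2'
    rw [e1, e2, zero_sub] at h2
    exact (mul_eq_zero.mp h2).resolve_left (neg_ne_zero.mpr hqq)
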